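/- Let w^R(τ,y) be the unique smooth solution of the Burgers equation w_τ+w w_y=0 with initial data w₀(y)=(w_++w_-)/2+((w_+−w_-)/2)tanh y, where w_-<w_+. Then for every 1≤p≤∞ there is a constant C (depending only on p and w_+−w_-) such that for all τ>0: ‖∂_y w^R(τ,·)‖_{L^p(ℝ)} ≤ C min{(w_+−w_-), (w_+−w_-)^{1/p} τ^{−1+1/p}} and ‖∂_y² w^R(τ,·)‖_{L^p(ℝ)} ≤ C min{(w_+−w_-), τ^{−1}}. -/

import Mathlib

open MeasureTheory Filter Set
open scoped ENNReal

noncomputable section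

/-- Partial derivative in the first (time) variable. -/
def dT (f : ℝ → ℝ → ℝ) (τ y : ℝ) : ℝ := deriv (fun s => f s y) τ

/-- Partial derivative in the second (space) variable. -/
def dY (f : ℝ → ℝ → ℝ) (τ y : ℝ) : ℝ := deriv (fun z => f τ z) y

/-- Second space derivative. -/
def dYY (f : ℝ → ℝ → ℝ) (τ y : ℝ) : ℝ := deriv (fun z => dY f τ z) y

/-- Mixed derivative: space derivative of the time derivative. -/
def dYT (f : ℝ → ℝ → ℝ) (τ y : ℝ) : ℝ := deriv (fun z => dT f τ z) y

/-- Smoothed (tanh) initial data for the Burgers equation. -/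
def w0 (wm wp y : ℝ) : ℝ := (wp + wm) / 2 + (wp - wm) / 2 * Real.tanh y

/-- `w` is the smooth solution of Burgers' equation `w_τ + w w_y = 0` with tanh-smoothed
Riemann data, characterized through the method of characteristics:
`w(τ,y) = w₀(x₀)` where `y = x₀ + w₀(x₀) τ`. -/
def IsSmoothedBurgers (wm wp : ℝ) (w : ℝ → ℝ → ℝ) : Prop :=
  ∀ τ ≥ (0:ℝ), ∀ y : ℝ, ∃ x0 : ℝ, y = x0 + w0 wm wp x0 * τ ∧ w τ y = w0 wm wp x0

set_option linter.unusedSectionVars false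

lemma tanh_sq_lt_one (x : ℝ) : Real.tanh x ^ 2 < 1 := by
  have hc := Real.cosh_pos x
  have hs := Real.cosh_sq x
  rw [Real.tanh_eq_sinh_div_cosh, div_pow, div_lt_one (by positivity)]
  nlinarith
lemma hasDerivAt_tanh (x : ℝ) : HasDerivAt Real.tanh (1 - Real.tanh x ^ 2) x := by
  have hc := Real.cosh_pos x
  have h : HasDerivAt (fun y => Real.sinh y / Real.cosh y)
      ((Real.cosh x * Real.cosh x - Real.sinh x * Real.sinh x) / (Real.cosh x) ^ 2) x :=
    (Real.hasDerivAt_sinh x).div (Real.hasDerivAt_cosh x) hc.ne'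
  have : Real.tanh = fun y => Real.sinh y / Real.cosh y := funext fun y => Real.tanh_eq_sinh_div_cosh y
  rw [this]
  convert h using 1
  simp only [Real.tanh_eq_sinh_div_cosh, div_pow]
  have hs := Real.cosh_sq x
  field_simp
lemma tanh_eq_aux (x : ℝ) : Real.tanh x = 1 - 2 / (Real.exp (2 * x) + 1) := by
  have h1 : Real.exp (2 * x) = Real.exp x * Real.exp x := by
    rw [two_mul, Real.exp_add]
  have h2 : Real.exp (-x) = (Real.exp x)⁻¹ := Real.exp_neg x
  have h3 : (0:ℝ) < Real.exp x := Real.exp_pos x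
  rw [Real.tanh_eq_sinh_div_cosh, Real.sinh_eq, Real.cosh_eq, h1, h2]
  have h4 : Real.exp x + (Real.exp x)⁻¹ > 0 := by positivity
  field_simp
  ring
lemma tendsto_tanh_atTop : Filter.Tendsto Real.tanh Filter.atTop (nhds 1) := by
  have : Filter.Tendsto (fun x : ℝ => 1 - 2 / (Real.exp (2*x) + 1)) Filter.atTop (nhds (1 - 0)) := by
    apply Filter.Tendsto.const_sub
    apply Filter.Tendsto.div_atTop tendsto_const_nhds
    apply Filter.tendsto_atTop_add_const_right
    exact Real.tendsto_exp_atTop.comp (Filter.tendsto_id.const_mul_atTop two_pos)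
  have he : (fun x : ℝ => 1 - 2 / (Real.exp (2*x) + 1)) = Real.tanh := by
    funext x; rw [tanh_eq_aux]
  rw [← he]
  simpa using this
lemma tendsto_tanh_atBot : Filter.Tendsto Real.tanh Filter.atBot (nhds (-1)) := by
  have h2 : Filter.Tendsto (fun x : ℝ => Real.exp (2*x)) Filter.atBot (nhds 0) := by
    apply Real.tendsto_exp_atBot.comp
    exact Filter.tendsto_id.const_mul_atBot two_pos
  have : Filter.Tendsto (fun x : ℝ => 1 - 2 / (Real.exp (2*x) + 1)) Filter.atBot (nhds (1 - 2/(0+1))) := by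
    apply Filter.Tendsto.const_sub
    exact (tendsto_const_nhds.div ((h2.add_const 1)) (by norm_num))
  norm_num at this
  have he : (fun x : ℝ => 1 - 2 / (Real.exp (2*x) + 1)) = Real.tanh := by
    funext x; rw [tanh_eq_aux]
  rwa [he] at this


open MeasureTheory Filter Set


def w0d (wm wp x : ℝ) : ℝ := (wp - wm) / 2 * (1 - Real.tanh x ^ 2)
def w0dd (wm wp x : ℝ) : ℝ := (wp - wm) / 2 * (-(2 * Real.tanh x) * (1 - Real.tanh x ^ 2))
def gB (wm wp τ x : ℝ) : ℝ := x + w0 wm wp x * τ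
def XB (wm wp τ : ℝ) : ℝ → ℝ := Function.invFun (gB wm wp τ)
def FB (wm wp τ x : ℝ) : ℝ := w0d wm wp x * (1 + w0d wm wp x * τ)⁻¹
def GB (wm wp τ x : ℝ) : ℝ := w0dd wm wp x * ((1 + w0d wm wp x * τ) ^ 3)⁻¹

section facts
variable {wm wp τ : ℝ} (h : wm < wp) (hτ : 0 < τ)
include h

lemma w0d_pos (x : ℝ) : 0 < w0d wm wp x := by
  have := tanh_sq_lt_one x
  have : (0:ℝ) < 1 - Real.tanh x ^ 2 := by linarith
  have ha : (0:ℝ) < (wp - wm) / 2 := by linarith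
  exact mul_pos ha this

lemma w0d_le (x : ℝ) : w0d wm wp x ≤ (wp - wm) / 2 := by
  have h2 : Real.tanh x ^ 2 ≥ 0 := sq_nonneg _
  have ha : (0:ℝ) < (wp - wm) / 2 := by linarith
  unfold w0d; nlinarith

lemma w0_bounds (x : ℝ) : wm < w0 wm wp x ∧ w0 wm wp x < wp := by
  have h1 := tanh_sq_lt_one x
  have h2 : |Real.tanh x| < 1 := by
    rw [abs_lt]; constructor <;> nlinarith [sq_nonneg (Real.tanh x + 1), sq_nonneg (Real.tanh x - 1)]
  rw [abs_lt] at h2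
  have ha : (0:ℝ) < (wp - wm) / 2 := by linarith
  constructor <;> [unfold w0; unfold w0] <;> nlinarith

lemma hasDerivAt_w0 (x : ℝ) : HasDerivAt (w0 wm wp) (w0d wm wp x) x := by
  have : HasDerivAt (fun y => (wp + wm) / 2 + (wp - wm) / 2 * Real.tanh y)
      (0 + (wp - wm) / 2 * (1 - Real.tanh x ^ 2)) x :=
    (hasDerivAt_const x _).add ((hasDerivAt_tanh x).const_mul _)
  exact this.congr_deriv (by rw [w0d, zero_add])

lemma hasDerivAt_w0d (x : ℝ) : HasDerivAt (w0d wm wp) (w0dd wm wp x) x := by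
  have ht : HasDerivAt (fun y => 1 - Real.tanh y ^ 2) (-(2 * Real.tanh x) * (1 - Real.tanh x ^ 2)) x := by
    have : HasDerivAt (fun y => Real.tanh y ^ 2) (2 * Real.tanh x ^ (2-1) * (1 - Real.tanh x ^2)) x :=
      (hasDerivAt_tanh x).pow 2
    have h2 := (hasDerivAt_const x (1:ℝ)).sub this
    exact h2.congr_deriv (by norm_num)
  exact ht.const_mul ((wp - wm)/2)

include hτ

lemma gd_pos (x : ℝ) : 0 < 1 + w0d wm wp x * τ := by
  have := w0d_pos h (x := x); nlinarith

lemma hasDerivAt_gB (x : ℝ) : HasDerivAt (gB wm wp τ) (1 + w0d wm wp x * τ) x := by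
  have : HasDerivAt (fun y => y + w0 wm wp y * τ) (1 + w0d wm wp x * τ) x :=
    (hasDerivAt_id x).add ((hasDerivAt_w0 h x).mul_const τ)
  exact this

lemma gB_strictMono : StrictMono (gB wm wp τ) := by
  apply strictMono_of_deriv_pos
  intro x
  rw [(hasDerivAt_gB h hτ x).deriv]
  exact gd_pos h hτ x

lemma gB_continuous : Continuous (gB wm wp τ) := by
  have : Differentiable ℝ (gB wm wp τ) := fun x => (hasDerivAt_gB h hτ x).differentiableAt
  exact this.continuous

lemma gB_surjective : Function.Surjective (gB wm wp τ) := by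
  apply Continuous.surjective (gB_continuous h hτ)
  · apply tendsto_atTop_mono (fun x => ?_) (tendsto_atTop_add_const_right _ (wm * τ) tendsto_id)
    have := (w0_bounds h (x := x)).1
    simp only [gB, id]
    nlinarith
  · apply tendsto_atBot_mono (fun x => ?_) (tendsto_atBot_add_const_right _ (wp * τ) tendsto_id)
    have := (w0_bounds h (x := x)).2
    simp only [gB, id]
    nlinarith

lemma gB_XB (y : ℝ) : gB wm wp τ (XB wm wp τ y) = y :=
  Function.rightInverse_invFun (gB_surjective h hτ) y

lemma XB_gB (x : ℝ) : XB wm wp τ (gB wm wp τ x) = x :=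
  Function.leftInverse_invFun (gB_strictMono h hτ).injective x

lemma XB_continuous : Continuous (XB wm wp τ) := by
  set e := StrictMono.orderIsoOfSurjective _ (gB_strictMono h hτ) (gB_surjective h hτ) with he
  have hxe : XB wm wp τ = ⇑e.symm := by
    funext y
    apply (gB_strictMono h hτ).injective
    rw [gB_XB h hτ]
    exact (StrictMono.orderIsoOfSurjective_self_symm_apply _ _ _ y).symm
  rw [hxe]
  exact (OrderIso.toHomeomorph e).symm.continuous

lemma XB_strictMono : StrictMono (XB wm wp τ) := by
  intro x y hxy
  rcases lt_trichotomy (XB wm wp τ x) (XB wm wp τ y) with h1 | h1 | h1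
  · exact h1
  · exfalso
    have := congrArg (gB wm wp τ) h1
    rw [gB_XB h hτ, gB_XB h hτ] at this
    linarith
  · exfalso
    have := gB_strictMono h hτ h1
    rw [gB_XB h hτ, gB_XB h hτ] at this
    linarith

lemma XB_tendsto_atTop : Filter.Tendsto (XB wm wp τ) Filter.atTop Filter.atTop := by
  apply Filter.tendsto_atTop_atTop_of_monotone (XB_strictMono h hτ).monotone
  intro b
  exact ⟨gB wm wp τ b, (XB_gB h hτ b).ge⟩

lemma XB_tendsto_atBot : Filter.Tendsto (XB wm wp τ) Filter.atBot Filter.atBot := by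
  apply Filter.tendsto_atBot_atBot_of_monotone (XB_strictMono h hτ).monotone
  intro b
  exact ⟨gB wm wp τ b, (XB_gB h hτ b).le⟩

lemma hasDerivAt_XB (y : ℝ) :
    HasDerivAt (XB wm wp τ) (1 + w0d wm wp (XB wm wp τ y) * τ)⁻¹ y := by
  apply HasDerivAt.of_local_left_inverse ((XB_continuous h hτ).continuousAt)
    (hasDerivAt_gB h hτ _) (gd_pos h hτ _).ne'
  exact Filter.Eventually.of_forall (gB_XB h hτ)

end facts


section sol
variable {wm wp τ : ℝ} {w : ℝ → ℝ → ℝ}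
variable (h : wm < wp) (hτ : 0 < τ) (hw : IsSmoothedBurgers wm wp w)
include h hτ hw

lemma w_eq (y : ℝ) : w τ y = w0 wm wp (XB wm wp τ y) := by
  obtain ⟨x0, hx0, hval⟩ := hw τ hτ.le y
  have hgx : gB wm wp τ x0 = y := by rw [gB]; linarith
  rw [hval, ← hgx, XB_gB h hτ]

lemma hasDerivAt_wy (y : ℝ) :
    HasDerivAt (fun z => w τ z) (FB wm wp τ (XB wm wp τ y)) y := by
  have h1 : HasDerivAt (fun z => w0 wm wp (XB wm wp τ z))
      (w0d wm wp (XB wm wp τ y) * (1 + w0d wm wp (XB wm wp τ y) * τ)⁻¹) y :=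
    (hasDerivAt_w0 h _).comp y (hasDerivAt_XB h hτ y)
  have heq : (fun z => w τ z) = fun z => w0 wm wp (XB wm wp τ z) :=
    funext fun z => w_eq h hτ hw z
  rw [heq]
  exact h1

lemma dY_eq (y : ℝ) : dY w τ y = FB wm wp τ (XB wm wp τ y) :=
  (hasDerivAt_wy h hτ hw y).deriv

omit hw in
lemma hasDerivAt_FB (x : ℝ) :
    HasDerivAt (FB wm wp τ) (w0dd wm wp x * ((1 + w0d wm wp x * τ) ^ 2)⁻¹) x := by
  have hD := gd_pos h hτ x
  have hinv : HasDerivAt (fun z => (1 + w0d wm wp z * τ)⁻¹)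
      (-(w0dd wm wp x * τ) / (1 + w0d wm wp x * τ) ^ 2) x := by
    exact (((hasDerivAt_w0d h x).mul_const τ).const_add 1).inv hD.ne'
  have hprod := (hasDerivAt_w0d h x).mul hinv
  have hval : w0dd wm wp x * ((1 + w0d wm wp x * τ) ^ 2)⁻¹ =
      w0dd wm wp x * (1 + w0d wm wp x * τ)⁻¹ +
        w0d wm wp x * (-(w0dd wm wp x * τ) / (1 + w0d wm wp x * τ) ^ 2) := by
    field_simp
    ring
  show HasDerivAt (fun z => w0d wm wp z * (1 + w0d wm wp z * τ)⁻¹) _ x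
  rw [hval]
  exact hprod

lemma hasDerivAt_dYw (y : ℝ) :
    HasDerivAt (fun z => dY w τ z) (GB wm wp τ (XB wm wp τ y)) y := by
  have h1 : HasDerivAt (fun z => FB wm wp τ (XB wm wp τ z))
      (w0dd wm wp (XB wm wp τ y) * ((1 + w0d wm wp (XB wm wp τ y) * τ) ^ 2)⁻¹ *
        (1 + w0d wm wp (XB wm wp τ y) * τ)⁻¹) y :=
    (hasDerivAt_FB h hτ _).comp y (hasDerivAt_XB h hτ y)
  have heq : (fun z => dY w τ z) = fun z => FB wm wp τ (XB wm wp τ z) :=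
    funext fun z => dY_eq h hτ hw z
  rw [heq]
  have hval : GB wm wp τ (XB wm wp τ y) =
      w0dd wm wp (XB wm wp τ y) * ((1 + w0d wm wp (XB wm wp τ y) * τ) ^ 2)⁻¹ *
        (1 + w0d wm wp (XB wm wp τ y) * τ)⁻¹ := by
    rw [GB, pow_succ, mul_inv, ← mul_assoc]
  rw [hval]
  exact h1

lemma dYY_eq (y : ℝ) : dYY w τ y = GB wm wp τ (XB wm wp τ y) :=
  (hasDerivAt_dYw h hτ hw y).deriv

end sol

section bounds
variable {wm wp τ : ℝ}
variable (h : wm < wp) (hτ : 0 < τ)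
include h hτ

lemma FB_nonneg (x : ℝ) : 0 ≤ FB wm wp τ x := by
  have h1 := w0d_pos h (x := x)
  have h2 := gd_pos h hτ x
  rw [FB]
  positivity

lemma FB_le (x : ℝ) : FB wm wp τ x ≤ min ((wp - wm) / 2) τ⁻¹ := by
  have h1 := w0d_pos h (x := x)
  have h2 := gd_pos h hτ x
  have h3 := w0d_le h (x := x)
  rw [le_min_iff]
  constructor
  · calc FB wm wp τ x ≤ w0d wm wp x * 1 := by
          apply mul_le_mul_of_nonneg_left _ h1.le
          rw [inv_le_one_iff₀]
          right; nlinarith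
        _ ≤ (wp - wm) / 2 := by rw [mul_one]; exact h3
  · rw [FB, mul_inv_le_iff₀ h2, inv_mul_eq_div, le_div_iff₀ hτ]
    nlinarith

lemma GB_abs_le (x : ℝ) : |GB wm wp τ x| ≤ 2 * min ((wp - wm) / 2) τ⁻¹ := by
  have h1 := w0d_pos h (x := x)
  have h2 := gd_pos h hτ x
  have hFle := FB_le h hτ x
  have hF0 := FB_nonneg h hτ x
  have habs : |GB wm wp τ x| ≤ 2 * FB wm wp τ x := by
    have ht2 := tanh_sq_lt_one x
    have htabs : |Real.tanh x| ≤ 1 := by nlinarith [abs_nonneg (Real.tanh x), sq_abs (Real.tanh x)]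
    have hwdd : |w0dd wm wp x| ≤ 2 * w0d wm wp x := by
      have : w0dd wm wp x = -(2 * Real.tanh x) * w0d wm wp x := by
        rw [w0dd, w0d]; ring
      rw [this, abs_mul, abs_neg, abs_mul, abs_of_pos h1, abs_two]
      nlinarith
    have hD1 : (1:ℝ) ≤ 1 + w0d wm wp x * τ := by nlinarith
    have hcube : ((1 + w0d wm wp x * τ) ^ 3)⁻¹ ≤ (1 + w0d wm wp x * τ)⁻¹ := by
      apply inv_anti₀ h2
      have hsq : (1:ℝ) ≤ (1 + w0d wm wp x * τ) ^ 2 := by nlinarith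
      nlinarith
    calc |GB wm wp τ x| = |w0dd wm wp x| * ((1 + w0d wm wp x * τ) ^ 3)⁻¹ := by
          rw [GB, abs_mul, abs_inv, abs_of_pos (pow_pos h2 3)]
        _ ≤ (2 * w0d wm wp x) * (1 + w0d wm wp x * τ)⁻¹ := by
          apply mul_le_mul hwdd hcube (by positivity) (by positivity)
        _ = 2 * FB wm wp τ x := by rw [FB]; ring
  linarith

end bounds

lemma continuous_tanh' : Continuous Real.tanh := by
  have : Real.tanh = fun x => Real.sinh x / Real.cosh x :=
    funext fun x => Real.tanh_eq_sinh_div_cosh x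
  rw [this]
  exact Real.continuous_sinh.div Real.continuous_cosh (fun x => (Real.cosh_pos x).ne')

lemma tanh_nonpos {x : ℝ} (hx : x ≤ 0) : Real.tanh x ≤ 0 := by
  rw [Real.tanh_eq_sinh_div_cosh]
  exact div_nonpos_of_nonpos_of_nonneg (Real.sinh_nonpos_iff.mpr hx) (Real.cosh_pos x).le

lemma tanh_nonneg {x : ℝ} (hx : 0 ≤ x) : 0 ≤ Real.tanh x := by
  rw [Real.tanh_eq_sinh_div_cosh]
  exact div_nonneg (Real.sinh_nonneg_iff.mpr hx) (Real.cosh_pos x).le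

section cont
variable {wm wp τ : ℝ} (h : wm < wp) (hτ : 0 < τ)

lemma continuous_w0d : Continuous (w0d wm wp) := by
  unfold w0d
  exact continuous_const.mul (continuous_const.sub (continuous_tanh'.pow 2))

lemma continuous_w0dd : Continuous (w0dd wm wp) := by
  unfold w0dd
  exact continuous_const.mul (((continuous_const.mul continuous_tanh').neg).mul
    (continuous_const.sub (continuous_tanh'.pow 2)))

include h hτ

lemma continuous_FB : Continuous (FB wm wp τ) := by
  unfold FB
  apply Continuous.mul continuous_w0d
  apply Continuous.inv₀ (continuous_const.add (continuous_w0d.mul continuous_const))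
  exact fun x => (gd_pos h hτ x).ne'

lemma continuous_GB : Continuous (GB wm wp τ) := by
  unfold GB
  apply Continuous.mul continuous_w0dd
  apply Continuous.inv₀ ((continuous_const.add (continuous_w0d.mul continuous_const)).pow 3)
  exact fun x => (pow_pos (gd_pos h hτ x) 3).ne'

end cont

lemma lintegral_le_of_Icc {f : ℝ → ℝ≥0∞} (hf : Measurable f) (c : ℝ) (B : ℝ≥0∞)
    (hB : ∀ n : ℕ, ∫⁻ x in Icc (c - n) (c + n), f x ≤ B) :
    ∫⁻ x, f x ≤ B := by
  have hmono : Monotone (fun n : ℕ => (Icc (c - (n:ℝ)) (c + n)).indicator f) := by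
    intro m n hmn
    apply Set.indicator_le_indicator_of_subset
      (Icc_subset_Icc (by have hc : (m:ℝ) ≤ n := Nat.cast_le.mpr hmn
                          linarith)
        (by have hc : (m:ℝ) ≤ n := Nat.cast_le.mpr hmn
            linarith))
    exact fun x => zero_le
  have key : ∫⁻ x, f x = ⨆ n : ℕ, ∫⁻ x, (Icc (c - (n:ℝ)) (c + n)).indicator f x := by
    rw [← lintegral_iSup (fun n => hf.indicator measurableSet_Icc) hmono]
    congr 1
    funext x
    apply le_antisymm
    · obtain ⟨n, hn⟩ := exists_nat_ge |x - c|
      rw [abs_le] at hn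
      have hx : x ∈ Icc (c - (n:ℝ)) (c + n) := ⟨by linarith [hn.1], by linarith [hn.2]⟩
      exact le_iSup_of_le n (by rw [Set.indicator_of_mem hx])
    · exact iSup_le fun n => Set.indicator_le_self _ _ x
  rw [key]
  apply iSup_le fun n => ?_
  rw [lintegral_indicator measurableSet_Icc]
  exact hB n

lemma lint_Icc_eq {g : ℝ → ℝ} (hg : Continuous g) (hpos : ∀ x, 0 ≤ g x) {a b : ℝ} (hab : a ≤ b) :
    ∫⁻ x in Icc a b, ENNReal.ofReal (g x) = ENNReal.ofReal (∫ x in a..b, g x) := by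
  rw [← ofReal_integral_eq_lintegral_ofReal (hg.integrableOn_Icc)
    (Filter.Eventually.of_forall hpos)]
  rw [integral_Icc_eq_integral_Ioc, ← intervalIntegral.integral_of_le hab]

section l1
variable {wm wp τ : ℝ} {w : ℝ → ℝ → ℝ}
variable (h : wm < wp) (hτ : 0 < τ) (hw : IsSmoothedBurgers wm wp w)
include h hτ hw

lemma continuous_dY : Continuous (fun y => dY w τ y) := by
  have heq : (fun y => dY w τ y) = fun y => FB wm wp τ (XB wm wp τ y) :=
    funext (dY_eq h hτ hw)
  rw [heq]
  exact (continuous_FB h hτ).comp (XB_continuous h hτ)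

lemma continuous_dYY : Continuous (fun y => dYY w τ y) := by
  have heq : (fun y => dYY w τ y) = fun y => GB wm wp τ (XB wm wp τ y) :=
    funext (dYY_eq h hτ hw)
  rw [heq]
  exact (continuous_GB h hτ).comp (XB_continuous h hτ)

lemma lint_dY_le : ∫⁻ y, ENNReal.ofReal |dY w τ y| ≤ ENNReal.ofReal (wp - wm) := by
  apply lintegral_le_of_Icc ((continuous_dY h hτ hw).abs.measurable.ennreal_ofReal) 0
  intro n
  have hn0 : (0:ℝ) ≤ n := Nat.cast_nonneg n
  have hab : (0:ℝ) - n ≤ 0 + n := by linarith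
  rw [lint_Icc_eq ((continuous_dY h hτ hw).abs) (fun x => abs_nonneg _) hab]
  apply ENNReal.ofReal_le_ofReal
  have hcongr : ∫ x in ((0:ℝ) - n)..((0:ℝ) + n), |dY w τ x| =
      ∫ x in ((0:ℝ) - n)..((0:ℝ) + n), dY w τ x := by
    apply intervalIntegral.integral_congr
    intro x _
    exact abs_of_nonneg (by rw [dY_eq h hτ hw]; exact FB_nonneg h hτ _)
  rw [hcongr, intervalIntegral.integral_eq_sub_of_hasDerivAt (fun x _ => by
        rw [dY_eq h hτ hw]
        exact hasDerivAt_wy h hτ hw x)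
      ((continuous_dY h hτ hw).intervalIntegrable _ _)]
  have h1 := w0_bounds h (x := XB wm wp τ ((0:ℝ) + n))
  have h2 := w0_bounds h (x := XB wm wp τ ((0:ℝ) - n))
  rw [w_eq h hτ hw, w_eq h hτ hw]
  linarith [h1.2, h2.1]

lemma lint_dYY_le : ∫⁻ y, ENNReal.ofReal |dYY w τ y| ≤
    ENNReal.ofReal (2 * min ((wp - wm) / 2) τ⁻¹) := by
  apply lintegral_le_of_Icc ((continuous_dYY h hτ hw).abs.measurable.ennreal_ofReal)
    (gB wm wp τ 0)
  intro n
  set c := gB wm wp τ 0 with hc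
  have hXc : XB wm wp τ c = 0 := XB_gB h hτ 0
  have hn0 : (0:ℝ) ≤ n := Nat.cast_nonneg n
  have hab : c - n ≤ c + n := by linarith
  rw [lint_Icc_eq ((continuous_dYY h hτ hw).abs) (fun x => abs_nonneg _) hab]
  apply ENNReal.ofReal_le_ofReal
  have hii : ∀ a b : ℝ, IntervalIntegrable (fun y => |dYY w τ y|) volume a b :=
    fun a b => ((continuous_dYY h hτ hw).abs).intervalIntegrable a b
  rw [← intervalIntegral.integral_add_adjacent_intervals (a := c - n) (b := c) (c := c + n)
    (hii _ _) (hii _ _)]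
  have hFTC : ∀ a b : ℝ, ∫ x in a..b, dYY w τ x = dY w τ b - dY w τ a := fun a b => by
    apply intervalIntegral.integral_eq_sub_of_hasDerivAt (fun x _ => ?_)
      ((continuous_dYY h hτ hw).intervalIntegrable _ _)
    rw [dYY_eq h hτ hw]
    exact hasDerivAt_dYw h hτ hw x
  have hdYle : ∀ x : ℝ, dY w τ x ≤ min ((wp - wm) / 2) τ⁻¹ := fun x => by
    rw [dY_eq h hτ hw]; exact FB_le h hτ _
  have hdY0 : ∀ x : ℝ, 0 ≤ dY w τ x := fun x => by
    rw [dY_eq h hτ hw]; exact FB_nonneg h hτ _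
  have hI1 : ∫ x in (c - n)..c, |dYY w τ x| ≤ min ((wp - wm) / 2) τ⁻¹ := by
    have hcongr : ∫ x in (c - n)..c, |dYY w τ x| = ∫ x in (c - n)..c, dYY w τ x := by
      apply intervalIntegral.integral_congr
      intro x hx
      rw [uIcc_of_le (by linarith)] at hx
      have hXle : XB wm wp τ x ≤ 0 := by
        rw [← hXc]; exact (XB_strictMono h hτ).monotone hx.2
      apply abs_of_nonneg
      rw [dYY_eq h hτ hw, GB]
      have ht := tanh_nonpos hXle
      have h2 := gd_pos h hτ (XB wm wp τ x)
      have ht2 := tanh_sq_lt_one (XB wm wp τ x)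
      have hdd : 0 ≤ w0dd wm wp (XB wm wp τ x) := by
        rw [w0dd]
        apply mul_nonneg (by linarith)
        exact mul_nonneg (by linarith) (by nlinarith)
      exact mul_nonneg hdd (inv_nonneg.mpr (pow_nonneg h2.le 3))
    rw [hcongr, hFTC]
    have := hdY0 (c - n)
    have := hdYle c
    linarith
  have hI2 : ∫ x in c..(c + n), |dYY w τ x| ≤ min ((wp - wm) / 2) τ⁻¹ := by
    have hcongr : ∫ x in c..(c + n), |dYY w τ x| = ∫ x in c..(c + n), -(dYY w τ x) := by
      apply intervalIntegral.integral_congr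
      intro x hx
      rw [uIcc_of_le (by linarith)] at hx
      have hXge : 0 ≤ XB wm wp τ x := by
        rw [← hXc]; exact (XB_strictMono h hτ).monotone hx.1
      apply abs_of_nonpos
      rw [dYY_eq h hτ hw, GB]
      have ht := tanh_nonneg hXge
      have h2 := gd_pos h hτ (XB wm wp τ x)
      have ht2 := tanh_sq_lt_one (XB wm wp τ x)
      have hdd : w0dd wm wp (XB wm wp τ x) ≤ 0 := by
        rw [w0dd]
        apply mul_nonpos_of_nonneg_of_nonpos (by linarith)
        apply mul_nonpos_of_nonpos_of_nonneg (by linarith) (by nlinarith)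
      exact mul_nonpos_of_nonpos_of_nonneg hdd (inv_nonneg.mpr (pow_nonneg h2.le 3))
    rw [hcongr, intervalIntegral.integral_neg, hFTC]
    have := hdY0 (c + n)
    have := hdYle c
    linarith
  linarith

end l1

lemma interp {f : ℝ → ℝ} (hf : AEStronglyMeasurable f volume) {p : ℝ≥0∞} (hp : 1 ≤ p)
    {L M : ℝ} (hL : 0 < L) (hM : 0 < M)
    (h1 : ∫⁻ y, ENNReal.ofReal |f y| ≤ ENNReal.ofReal L)
    (hi : ∀ y, |f y| ≤ M) :
    eLpNorm f p volume ≤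
      ENNReal.ofReal (L ^ (1 / p).toReal * M ^ (1 - (1 / p).toReal)) := by
  rcases eq_or_ne p ∞ with rfl | hptop
  · have hθ : (1 / (∞:ℝ≥0∞)).toReal = 0 := by simp
    rw [hθ, Real.rpow_zero, one_mul, sub_zero, Real.rpow_one, eLpNorm_exponent_top]
    exact eLpNormEssSup_le_of_ae_bound (ae_of_all _ fun y => by
      rw [Real.norm_eq_abs]; exact hi y)
  · have hp0 : p ≠ 0 := by
      intro h0
      rw [h0] at hp
      exact absurd hp (by simp)
    set q := p.toReal with hq
    have hq1 : 1 ≤ q := by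
      rw [hq, ← ENNReal.toReal_one]
      exact ENNReal.toReal_mono hptop hp
    have hq0 : 0 < q := by linarith
    have hθ : (1 / p).toReal = 1 / q := by
      rw [one_div, one_div, ENNReal.toReal_inv]
    rw [hθ, eLpNorm_eq_lintegral_rpow_enorm_toReal hp0 hptop]
    have key : ∀ y, (‖f y‖₊ : ℝ≥0∞) ^ q ≤
        ENNReal.ofReal (M ^ (q - 1)) * ENNReal.ofReal |f y| := by
      intro y
      rw [← enorm_eq_nnnorm, Real.enorm_eq_ofReal_abs]
      rcases eq_or_lt_of_le (abs_nonneg (f y)) with h0 | hpos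
      · rw [← h0]
        simp only [ENNReal.ofReal_zero, mul_zero]
        rw [ENNReal.zero_rpow_of_pos hq0]
      · rw [ENNReal.ofReal_rpow_of_pos hpos,
          ← ENNReal.ofReal_mul (by positivity)]
        apply ENNReal.ofReal_le_ofReal
        have hsplit : |f y| ^ q = |f y| ^ (q - 1) * |f y| := by
          rw [show q = q - 1 + 1 by ring, Real.rpow_add_one hpos.ne']
          ring_nf
        rw [hsplit]
        apply mul_le_mul_of_nonneg_right _ (abs_nonneg _)
        exact Real.rpow_le_rpow (abs_nonneg _) (hi y) (by linarith)
    calc (∫⁻ y, (‖f y‖₊ : ℝ≥0∞) ^ q) ^ (1 / q)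
        ≤ (∫⁻ y, ENNReal.ofReal (M ^ (q - 1)) * ENNReal.ofReal |f y|) ^ (1 / q) := by
          apply ENNReal.rpow_le_rpow (lintegral_mono key) (by positivity)
      _ = (ENNReal.ofReal (M ^ (q - 1)) * ∫⁻ y, ENNReal.ofReal |f y|) ^ (1 / q) := by
          rw [lintegral_const_mul' _ _ ENNReal.ofReal_ne_top]
      _ ≤ (ENNReal.ofReal (M ^ (q - 1)) * ENNReal.ofReal L) ^ (1 / q) := by
          apply ENNReal.rpow_le_rpow _ (by positivity)
          exact mul_le_mul_right h1 _
      _ = ENNReal.ofReal ((M ^ (q - 1) * L) ^ (1 / q)) := by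
          rw [← ENNReal.ofReal_mul (by positivity)]
          rw [← ENNReal.ofReal_rpow_of_pos (by positivity)]
      _ = ENNReal.ofReal (L ^ (1 / q) * M ^ (1 - 1 / q)) := by
          congr 1
          rw [Real.mul_rpow (by positivity) hL.le, ← Real.rpow_mul hM.le]
          rw [show (q - 1) * (1 / q) = 1 - 1 / q by field_simp]
          ring

/-- `L^p` decay estimates for the first and second space derivatives of the smoothed
Burgers solution. -/
theorem burgers_lp_estimates (wm wp : ℝ) (h : wm < wp) (w : ℝ → ℝ → ℝ)
    (hw : IsSmoothedBurgers wm wp w) (p : ℝ≥0∞) (hp : 1 ≤ p) :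
    ∃ C > (0:ℝ), ∀ τ > (0:ℝ),
      eLpNorm (fun y => dY w τ y) p volume ≤
        ENNReal.ofReal
          (C * min (wp - wm) ((wp - wm) ^ (1 / p).toReal * τ ^ (-1 + (1 / p).toReal))) ∧
      eLpNorm (fun y => dYY w τ y) p volume ≤ ENNReal.ofReal (C * min (wp - wm) τ⁻¹) := by
  refine ⟨2, by norm_num, fun τ hτ => ?_⟩
  have hΔ : (0:ℝ) < wp - wm := by linarith
  have hτi : (0:ℝ) < τ⁻¹ := by positivity
  set m := min ((wp - wm) / 2) τ⁻¹ with hm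
  have hmpos : 0 < m := lt_min (by linarith) hτi
  set θ := (1 / p).toReal with hθdef
  have hθ0 : 0 ≤ θ := ENNReal.toReal_nonneg
  have hθ1 : θ ≤ 1 := by
    rw [hθdef, one_div]
    calc (p⁻¹).toReal ≤ (1:ℝ≥0∞).toReal :=
          ENNReal.toReal_mono (by norm_num) (ENNReal.inv_le_one.mpr hp)
      _ = 1 := ENNReal.toReal_one
  constructor
  · -- first derivative
    have hptw : ∀ y : ℝ, |dY w τ y| ≤ m := fun y => by
      rw [dY_eq h hτ hw, abs_of_nonneg (FB_nonneg h hτ _)]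
      exact FB_le h hτ _
    have hstep := interp ((continuous_dY h hτ hw).aestronglyMeasurable) hp hΔ hmpos
      (lint_dY_le h hτ hw) hptw
    refine hstep.trans (ENNReal.ofReal_le_ofReal ?_)
    rw [← hθdef]
    have hmΔ : m ≤ wp - wm := le_trans (min_le_left _ _) (by linarith)
    have hb1 : (wp - wm) ^ θ * m ^ (1 - θ) ≤ wp - wm := by
      calc (wp - wm) ^ θ * m ^ (1 - θ) ≤ (wp - wm) ^ θ * (wp - wm) ^ (1 - θ) :=
            mul_le_mul_of_nonneg_left
              (Real.rpow_le_rpow hmpos.le hmΔ (by linarith)) (by positivity)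
        _ = (wp - wm) ^ (θ + (1 - θ)) := (Real.rpow_add hΔ _ _).symm
        _ = wp - wm := by norm_num
    have hb2 : (wp - wm) ^ θ * m ^ (1 - θ) ≤ (wp - wm) ^ θ * τ ^ (-1 + θ) := by
      apply mul_le_mul_of_nonneg_left _ (by positivity)
      calc m ^ (1 - θ) ≤ (τ⁻¹) ^ (1 - θ) :=
            Real.rpow_le_rpow hmpos.le (min_le_right _ _) (by linarith)
        _ = τ ^ (-1 + θ) := by
            rw [show (-1 + θ : ℝ) = -(1 - θ) by ring, Real.rpow_neg hτ.le,
              Real.inv_rpow hτ.le]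
    have hmin : (wp - wm) ^ θ * m ^ (1 - θ) ≤
        min (wp - wm) ((wp - wm) ^ θ * τ ^ (-1 + θ)) := le_min hb1 hb2
    have hminpos : (0:ℝ) ≤ min (wp - wm) ((wp - wm) ^ θ * τ ^ (-1 + θ)) := by
      apply le_min hΔ.le
      positivity
    linarith
  · -- second derivative
    have hptw : ∀ y : ℝ, |dYY w τ y| ≤ 2 * m := fun y => by
      rw [dYY_eq h hτ hw]
      exact GB_abs_le h hτ _
    have hstep := interp ((continuous_dYY h hτ hw).aestronglyMeasurable) hp
      (by linarith : (0:ℝ) < 2 * m) (by linarith : (0:ℝ) < 2 * m)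
      (lint_dYY_le h hτ hw) hptw
    refine hstep.trans (ENNReal.ofReal_le_ofReal ?_)
    rw [← hθdef]
    have hcollapse : (2 * m) ^ θ * (2 * m) ^ (1 - θ) = 2 * m := by
      rw [← Real.rpow_add (by linarith)]
      norm_num
    rw [hcollapse]
    have : m ≤ min (wp - wm) τ⁻¹ :=
      le_min (le_trans (min_le_left _ _) (by linarith)) (min_le_right _ _)
    linarith
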